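/- Fix a positive integer n, and for a positive integer m define b_m ∈ Ar_n by b_m(d) = C(dm−1, d−1) mod n. Then for any h ∈ Ar_n, h∗E lies in R_n if and only if h∗b_m lies in R_n, where E is the constant function 1. -/

import Mathlib

/-- Membership in the subring `R_n` of special arithmetic functions mod `n`. -/
def Rn (n : ℕ) (f : ArithmeticFunction (ZMod n)) : Prop :=
  ∀ t : ℕ, t ∣ n → (t : ZMod n) ∣ f t

/-- The constant function `1` (on positive integers), as an arithmetic function
with values in `ZMod n`. -/
def Efun (n : ℕ) : ArithmeticFunction (ZMod n) :=
  ⟨fun a => if a = 0 then 0 else 1, by simp⟩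

/-- The classical Möbius function reduced mod `n`. -/
noncomputable def muMod (n : ℕ) : ArithmeticFunction (ZMod n) :=
  ⟨fun a => ((ArithmeticFunction.moebius a : ℤ) : ZMod n), by simp⟩

/-- The binomial coefficient function `b_m(d) = C(dm-1, d-1)` mod `n`, as an
arithmetic function. -/
def bm (n m : ℕ) : ArithmeticFunction (ZMod n) :=
  ⟨fun d => if d = 0 then 0 else ((d * m - 1).choose (d - 1) : ZMod n), by simp⟩

namespace Stmt6Aux

open Finset Polynomial ArithmeticFunction
open scoped ArithmeticFunction.Moebius ArithmeticFunction.zeta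

/-- The integer binomial sequence `b_m(x) = C(xm - 1, x - 1)` over `ℤ`. -/
def bz (m : ℕ) (x : ℕ) : ℤ := ((x * m - 1).choose (x - 1) : ℤ)

lemma key_poly (p : ℕ) (hp : p.Prime) (k w : ℕ) :
    ((p : ℤ[X]) ^ (k+1)) ∣ (1 + X) ^ (p ^ (k+1) * w) - (1 + X ^ p) ^ (p ^ k * w) := by
  have h1 : (p : ℤ[X]) ∣ (1 + X) ^ p - (1 + X ^ p) := by
    obtain ⟨r, hr⟩ := exists_add_pow_prime_eq hp (1 : ℤ[X]) X
    exact ⟨X * r, by rw [hr]; ring⟩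
  have h2 := dvd_sub_pow_of_dvd_sub h1 k
  have h3 : ((1 + X : ℤ[X]) ^ p) ^ p ^ k = (1 + X) ^ p ^ (k+1) := by
    rw [← pow_mul, pow_succ, mul_comm (p^k) p]
  rw [h3] at h2
  calc ((p:ℤ[X])) ^ (k+1)
      ∣ (1 + X : ℤ[X]) ^ p ^ (k+1) - (1 + X ^ p) ^ p ^ k := h2
    _ ∣ ((1 + X : ℤ[X]) ^ p ^ (k+1)) ^ w - ((1 + X ^ p) ^ p ^ k) ^ w :=
        sub_dvd_pow_sub_pow _ _ w
    _ = (1 + X) ^ (p ^ (k+1) * w) - (1 + X ^ p) ^ (p ^ k * w) := by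
        rw [← pow_mul, ← pow_mul]

lemma key_coeff (p : ℕ) (hp : p.Prime) (k w x : ℕ) (hx : p ∣ x) :
    ((p:ℤ) ^ (k+1)) ∣ ((p ^ (k+1) * w).choose x : ℤ) - ((p ^ k * w).choose (x/p) : ℤ) := by
  obtain ⟨G, hG⟩ := key_poly p hp k w
  have hc := congrArg (fun F : ℤ[X] => F.coeff x) hG
  simp only [coeff_sub] at hc
  have e1 : ((1 + X : ℤ[X]) ^ (p ^ (k+1) * w)).coeff x = ((p ^ (k+1) * w).choose x : ℤ) := by
    rw [add_comm, coeff_X_add_one_pow]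
  have e2 : ((1 + X ^ p : ℤ[X]) ^ (p ^ k * w)).coeff x = ((p ^ k * w).choose (x/p) : ℤ) := by
    have hx1 : (1 + X ^ p : ℤ[X]) = expand ℤ p (1 + X) := by
      simp [map_add, expand_X]
    rw [hx1, ← map_pow, coeff_expand hp.pos, if_pos hx, add_comm, coeff_X_add_one_pow]
  have e3 : (((p : ℤ[X]) ^ (k+1)) * G).coeff x = (p:ℤ)^(k+1) * G.coeff x := by
    rw [← Polynomial.C_eq_natCast, ← C_pow, coeff_C_mul]
  rw [e1, e2] at hc
  exact ⟨G.coeff x, by rw [hc, hG] at *; rw [e3]⟩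

lemma choose_eq (m x : ℕ) (hx : 0 < x) : (x*m).choose x = m * ((x*m-1).choose (x-1)) := by
  rcases Nat.eq_zero_or_pos m with rfl | hm
  · simp [Nat.choose_eq_zero_of_lt hx]
  · have hxm : 0 < x * m := Nat.mul_pos hx hm
    have h := Nat.add_one_mul_choose_eq (x*m - 1) (x - 1)
    have h1 : x * m - 1 + 1 = x * m := Nat.succ_pred_eq_of_pos hxm
    have h2 : x - 1 + 1 = x := Nat.succ_pred_eq_of_pos hx
    rw [h1, h2] at h
    apply Nat.eq_of_mul_eq_mul_right hx
    rw [← h]; ring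

lemma bz_step (m : ℕ) (hm : 0 < m) (p : ℕ) (hp : p.Prime) (x : ℕ) (hx0 : 0 < x) (hx : p ∣ x) :
    ((p:ℤ) ^ (x.factorization p)) ∣ bz m x - bz m (x / p) := by
  set r := x.factorization p with hr
  set e := m.factorization p with he
  have hr1 : 1 ≤ r := hp.factorization_pos_of_dvd hx0.ne' hx
  have hs : 1 ≤ r + e := le_add_right hr1
  have hdvd : p ^ (r + e) ∣ x * m := by
    rw [pow_add]; exact mul_dvd_mul (Nat.ordProj_dvd x p) (Nat.ordProj_dvd m p)
  obtain ⟨w, hw⟩ := hdvd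
  have hkey := key_coeff p hp (r + e - 1) w x hx
  rw [Nat.sub_add_cancel hs] at hkey
  have hw' : p ^ (r + e - 1) * w = x * m / p := by
    rw [hw]
    rw [show p ^ (r+e) = p * p ^ (r+e-1) by
      conv_lhs => rw [← Nat.sub_add_cancel hs]
      rw [pow_succ, mul_comm]]
    rw [mul_assoc, Nat.mul_div_cancel_left _ hp.pos]
  rw [← hw, hw'] at hkey
  have hxp0 : 0 < x / p := Nat.div_pos (Nat.le_of_dvd hx0 hx) hp.pos
  have hxm : (x * m / p) = (x / p) * m := by
    obtain ⟨x', rfl⟩ := hx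
    rw [Nat.mul_div_cancel_left _ hp.pos, mul_assoc, Nat.mul_div_cancel_left _ hp.pos]
  have h1 : ((x*m).choose x : ℤ) = (m : ℤ) * bz m x := by
    rw [choose_eq m x hx0]; push_cast [bz]; ring
  have h2 : ((x*m/p).choose (x/p) : ℤ) = (m : ℤ) * bz m (x/p) := by
    rw [hxm, choose_eq m (x/p) hxp0]; push_cast [bz]; ring
  rw [h1, h2, ← mul_sub] at hkey
  set m' := m / p ^ e with hm'
  have h0 : p ^ e * m' = m := Nat.ordProj_mul_ordCompl_eq_self m p
  have hmm : (m : ℤ) = (p:ℤ)^e * (m' : ℤ) := by rw [← h0]; push_cast; ring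
  rw [hmm, pow_add, mul_assoc] at hkey
  have hne : ((p:ℤ))^e ≠ 0 := pow_ne_zero _ (by exact_mod_cast hp.ne_zero)
  have hkey2 : ((p:ℤ))^r ∣ (m' : ℤ) * (bz m x - bz m (x/p)) := by
    rcases hkey with ⟨c, hc⟩
    refine ⟨c, mul_left_cancel₀ hne ?_⟩
    linear_combination hc
  have hprime : Prime (p : ℤ) := Int.prime_iff_natAbs_prime.mpr (by simpa)
  refine hprime.pow_dvd_of_dvd_mul_left _ ?_ hkey2
  have := Nat.not_dvd_ordCompl hp hm.ne'
  exact_mod_cast fun hc => this (Int.natCast_dvd_natCast.mp hc)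

/-- The Möbius transform of the sequence `b_m`. -/
def Gz (m : ℕ) (t : ℕ) : ℤ := ∑ d ∈ t.divisors, (μ d : ℤ) * bz m (t / d)

lemma prime_pow_dvd_Gz (m : ℕ) (hm : 0 < m) (t : ℕ) (ht : 0 < t) (p : ℕ) (hp : p.Prime)
    (hpt : p ∣ t) : (p:ℤ) ^ (t.factorization p) ∣ Gz m t := by
  classical
  set r := t.factorization p with hrdef
  set S := t.divisors.filter (fun d => ¬ p ∣ d) with hS
  have htp_mul : p * (t / p) = t := Nat.mul_div_cancel' hpt
  have stepB : ∑ d ∈ t.divisors.filter (fun d => p ∣ d), (μ d : ℤ) * bz m (t / d)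
      = ∑ e ∈ (t / p).divisors, (μ (p * e) : ℤ) * bz m (t / (p * e)) := by
    apply Finset.sum_bij' (fun d _ => d / p) (fun e _ => p * e)
    · intro d hd
      simp only [mem_filter, Nat.mem_divisors] at hd
      obtain ⟨⟨hdt, _⟩, hpd⟩ := hd
      obtain ⟨d', rfl⟩ := hpd
      rw [Nat.mul_div_cancel_left _ hp.pos]
      simp only [Nat.mem_divisors]
      refine ⟨(Nat.dvd_div_iff_mul_dvd hpt).mpr hdt, ?_⟩
      intro h0
      rw [h0, mul_zero] at htp_mul; omega
    · intro e he
      simp only [Nat.mem_divisors] at he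
      simp only [mem_filter, Nat.mem_divisors]
      exact ⟨⟨by rw [← htp_mul]; exact mul_dvd_mul_left p he.1, ht.ne'⟩, Dvd.intro _ rfl⟩
    · intro d hd
      simp only [mem_filter] at hd
      exact Nat.mul_div_cancel' hd.2
    · intro e _
      exact Nat.mul_div_cancel_left _ hp.pos
    · intro d hd
      simp only [mem_filter] at hd
      rw [Nat.mul_div_cancel' hd.2]
  have mu_vanish : ∀ e, p ∣ e → (μ (p * e) : ℤ) = 0 := by
    intro e hpe
    have hpp : p * p ∣ p * e := mul_dvd_mul_left p hpe
    have : ¬ Squarefree (p * e) := fun hsq => hp.one_lt.ne' (Nat.isUnit_iff.mp (hsq p hpp))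
    simp [ArithmeticFunction.moebius_eq_zero_of_not_squarefree this]
  have stepC : ∑ e ∈ (t / p).divisors, (μ (p * e) : ℤ) * bz m (t / (p * e))
      = ∑ e ∈ S, (μ (p * e) : ℤ) * bz m (t / (p * e)) := by
    rw [← Finset.sum_filter_add_sum_filter_not ((t/p).divisors) (fun e => ¬ p ∣ e)]
    have hz : ∑ e ∈ (t/p).divisors.filter (fun e => ¬¬ p ∣ e),
        (μ (p * e) : ℤ) * bz m (t / (p * e)) = 0 := by
      apply Finset.sum_eq_zero
      intro e he
      simp only [mem_filter, not_not] at he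
      rw [mu_vanish e he.2, zero_mul]
    rw [hz, add_zero]
    apply Finset.sum_congr _ (fun _ _ => rfl)
    ext d
    simp only [mem_filter, Nat.mem_divisors, hS]
    constructor
    · rintro ⟨⟨hd, _⟩, hpd⟩
      exact ⟨⟨hd.trans (Nat.div_dvd_of_dvd hpt), ht.ne'⟩, hpd⟩
    · rintro ⟨⟨hd, _⟩, hpd⟩
      refine ⟨⟨?_, fun h0 => by rw [h0, mul_zero] at htp_mul; omega⟩, hpd⟩
      have hcop : Nat.Coprime d p := Nat.Coprime.symm ((hp.coprime_iff_not_dvd).mpr hpd)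
      exact hcop.dvd_of_dvd_mul_left (by rw [htp_mul]; exact hd)
  have split := (Finset.sum_filter_add_sum_filter_not t.divisors (fun d => p ∣ d)
    (fun d => (μ d : ℤ) * bz m (t / d))).symm
  have hr1 : 1 ≤ r := hp.factorization_pos_of_dvd ht.ne' hpt
  have key : Gz m t = ∑ d ∈ S, (μ d : ℤ) * (bz m (t / d) - bz m ((t / d) / p)) := by
    rw [Gz, split, stepB, stepC, ← Finset.sum_add_distrib]
    apply Finset.sum_congr rfl
    intro d hd
    simp only [hS, mem_filter, Nat.mem_divisors] at hd
    obtain ⟨⟨hdt, _⟩, hpd⟩ := hd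
    have hcop : Nat.Coprime p d := (hp.coprime_iff_not_dvd).mpr hpd
    have hmu : (μ (p * d) : ℤ) = -(μ d : ℤ) := by
      rw [ArithmeticFunction.isMultiplicative_moebius.map_mul_of_coprime hcop,
        ArithmeticFunction.moebius_apply_prime hp]
      ring
    have hdiv : t / (p * d) = (t / d) / p := by
      rw [Nat.div_div_eq_div_mul, mul_comm]
    rw [hmu, hdiv]; ring
  rw [key]
  apply Finset.dvd_sum
  intro d hd
  simp only [hS, mem_filter, Nat.mem_divisors] at hd
  obtain ⟨⟨hdt, _⟩, hpd⟩ := hd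
  have hd0 : 0 < d := Nat.pos_of_dvd_of_pos hdt ht
  have htd0 : 0 < t / d := Nat.div_pos (Nat.le_of_dvd ht hdt) hd0
  have hfac : (t / d).factorization p = r := by
    rw [Nat.factorization_div hdt, Finsupp.tsub_apply,
      Nat.factorization_eq_zero_of_not_dvd hpd, Nat.sub_zero]
  have hptd : p ∣ t / d := by
    rw [hp.dvd_iff_one_le_factorization htd0.ne', hfac]; exact hr1
  have := bz_step m hm p hp (t / d) htd0 hptd
  rw [hfac] at this
  exact Dvd.dvd.mul_left this _

/-- The Gauss congruence for `b_m`. -/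
lemma nat_dvd_Gz (m : ℕ) (hm : 0 < m) (t : ℕ) (ht : 0 < t) : (t:ℤ) ∣ Gz m t := by
  rw [Int.natCast_dvd]
  rw [Nat.dvd_iff_prime_pow_dvd_dvd]
  intro p k hpk hdvd
  rcases Nat.eq_zero_or_pos k with rfl | hk
  · simpa using one_dvd _
  have hp : p.Prime := hpk
  have hpt : p ∣ t := dvd_trans (dvd_pow_self p hk.ne') hdvd
  have hk_le : k ≤ t.factorization p := (Nat.Prime.pow_dvd_iff_le_factorization hp ht.ne').mp hdvd
  have h1 : (p:ℤ) ^ (t.factorization p) ∣ Gz m t := prime_pow_dvd_Gz m hm t ht p hp hpt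
  have h2 : ((p ^ k : ℕ) : ℤ) ∣ Gz m t :=
    dvd_trans (by push_cast; exact pow_dvd_pow _ hk_le) h1
  exact Int.natCast_dvd.mp h2


lemma Efun_mul_muMod (n : ℕ) : Efun n * muMod n = 1 := by
  have h1 : Efun n = ((ζ : ArithmeticFunction ℕ) : ArithmeticFunction (ZMod n)) := by
    ext d
    simp [Efun, natCoe_apply, zeta_apply]
  have h2 : muMod n = ((μ : ArithmeticFunction ℤ) : ArithmeticFunction (ZMod n)) := by
    ext d
    simp [muMod, intCoe_apply]
  rw [h1, h2, coe_zeta_mul_coe_moebius]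

lemma gm_one (n m : ℕ) (hm : 0 < m) : (muMod n * bm n m) 1 = 1 := by
  rw [ArithmeticFunction.mul_apply, Nat.divisorsAntidiagonal_one, Finset.sum_singleton]
  simp [muMod, bm, Nat.one_mul]

lemma gm_apply (n m : ℕ) (s : ℕ) (hs : 0 < s) :
    (muMod n * bm n m) s = ((Gz m s : ℤ) : ZMod n) := by
  have hGz : Gz m s = ∑ x ∈ s.divisorsAntidiagonal, (μ x.1 : ℤ) * bz m x.2 :=
    (Nat.sum_divisorsAntidiagonal (fun a b => (μ a : ℤ) * bz m b)).symm
  rw [ArithmeticFunction.mul_apply, hGz]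
  push_cast
  apply Finset.sum_congr rfl
  rintro ⟨a, b⟩ hab
  rw [Nat.mem_divisorsAntidiagonal] at hab
  have hb0 : b ≠ 0 := by rintro rfl; rw [mul_zero] at hab; exact hs.ne' hab.1.symm
  simp [muMod, bm, bz, hb0]

lemma gm_dvd (n m : ℕ) (hm : 0 < m) (s : ℕ) (hs : 0 < s) :
    (s : ZMod n) ∣ (muMod n * bm n m) s := by
  rw [gm_apply n m s hs]
  obtain ⟨c, hc⟩ := nat_dvd_Gz m hm s hs
  exact ⟨(c : ZMod n), by rw [hc]; push_cast; ring⟩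

lemma Rn_mul_iff (n : ℕ) (hn : 0 < n) (g : ArithmeticFunction (ZMod n)) (hg1 : g 1 = 1)
    (hg : ∀ s : ℕ, 0 < s → (s : ZMod n) ∣ g s) (f : ArithmeticFunction (ZMod n)) :
    Rn n f ↔ Rn n (f * g) := by
  constructor
  · intro hf t ht
    rw [ArithmeticFunction.mul_apply]
    apply Finset.dvd_sum
    rintro ⟨a, b⟩ hab
    rw [Nat.mem_divisorsAntidiagonal] at hab
    obtain ⟨hab1, ht0⟩ := hab
    have hat : a ∣ t := ⟨b, hab1.symm⟩
    have ha : a ∣ n := hat.trans ht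
    have hb0 : 0 < b := Nat.pos_of_ne_zero (by rintro rfl; rw [mul_zero] at hab1; exact ht0 hab1.symm)
    obtain ⟨u, hu⟩ := hf a ha
    obtain ⟨v, hv⟩ := hg b hb0
    refine ⟨u * v, ?_⟩
    rw [hu, hv, ← hab1]
    push_cast
    ring
  · intro hfg t
    induction t using Nat.strong_induction_on with
    | _ t IH =>
    intro ht
    have ht0 : t ≠ 0 := by rintro rfl; exact hn.ne' (zero_dvd_iff.mp ht)
    have hmem : (t, 1) ∈ t.divisorsAntidiagonal := by
      rw [Nat.mem_divisorsAntidiagonal]; exact ⟨mul_one t, ht0⟩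
    have hsum := hfg t ht
    rw [ArithmeticFunction.mul_apply, ← Finset.add_sum_erase _ _ hmem] at hsum
    have hrest : (t : ZMod n) ∣
        ∑ x ∈ t.divisorsAntidiagonal.erase (t, 1), f x.1 * g x.2 := by
      apply Finset.dvd_sum
      rintro ⟨a, b⟩ hab
      have hne := Finset.ne_of_mem_erase hab
      have hab' := Finset.mem_of_mem_erase hab
      rw [Nat.mem_divisorsAntidiagonal] at hab'
      obtain ⟨hab1, _⟩ := hab'
      have hb0 : 0 < b := Nat.pos_of_ne_zero (by rintro rfl; rw [mul_zero] at hab1; exact ht0 hab1.symm)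
      have ha0 : 0 < a := Nat.pos_of_ne_zero (by rintro rfl; rw [zero_mul] at hab1; exact ht0 hab1.symm)
      have hb1 : 1 < b := by
        rcases Nat.lt_or_ge b 2 with hb | hb
        · exfalso
          have hb1' : b = 1 := by omega
          subst hb1'
          have hat : a = t := by simpa using hab1
          exact hne (by rw [hat])
        · omega
      have halt : a < t := by
        rw [← hab1]
        exact Nat.lt_mul_iff_one_lt_right ha0 |>.mpr hb1
      have hat : a ∣ t := ⟨b, hab1.symm⟩
      have han : a ∣ n := hat.trans ht
      obtain ⟨u, hu⟩ := IH a halt han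
      obtain ⟨v, hv⟩ := hg b hb0
      refine ⟨u * v, ?_⟩
      rw [hu, hv, ← hab1]
      push_cast
      ring
    have hft : (t : ZMod n) ∣ f t * g 1 := (dvd_add_left hrest).mp hsum
    rwa [hg1, mul_one] at hft

end Stmt6Aux

/-- For any arithmetic function `h` mod `n` and positive `m`:
`h ∗ E` is special iff `h ∗ b_m` is special. -/
theorem stmt6 (n : ℕ) (hn : 0 < n) (m : ℕ) (hm : 0 < m)
    (h : ArithmeticFunction (ZMod n)) :
    Rn n (h * Efun n) ↔ Rn n (h * bm n m) := by
  have hgdvd : ∀ s : ℕ, 0 < s → (s : ZMod n) ∣ (muMod n * bm n m) s := fun s hs =>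
    Stmt6Aux.gm_dvd n m hm s hs
  have hiff := Stmt6Aux.Rn_mul_iff n hn (muMod n * bm n m) (Stmt6Aux.gm_one n m hm)
    hgdvd (h * Efun n)
  have hid : (h * Efun n) * (muMod n * bm n m) = h * bm n m := by
    rw [mul_assoc, ← mul_assoc (Efun n), Stmt6Aux.Efun_mul_muMod, one_mul]
  rw [hid] at hiff
  exact hiff
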